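/- arXiv:1802.07171 — 2 statements merged into one kernel-verified Lean document; each statement's English description precedes it below -/
import Mathlib

section
/- Let D ⊆ ℝⁿ be a domain with c_α(Dᶜ) > 0 and let μ ∈ M(D) be a signed Radon measure on D with compact support in D. Then μ has finite α-Green energy g^α_D(μ,μ) < ∞ if and only if its extension by zero belongs to E_α(ℝⁿ), i.e., has finite α-Riesz energy. -/
open MeasureTheory
open scoped ENNReal

/-- Euclidean space `ℝⁿ`. -/
abbrev Rn (n : ℕ) := EuclideanSpace ℝ (Fin n)

/-- The α-Riesz kernel `κ_α(x,y) = |x − y|^{α−n}` on `ℝⁿ` (with values in `[0,∞]`). -/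
noncomputable def rieszK (n : ℕ) (α : ℝ) (x y : Rn n) : ℝ≥0∞ :=
  (‖x - y‖₊ : ℝ≥0∞) ^ (α - n)

/-- The potential of a positive measure relative to a kernel `κ`. -/
noncomputable def pot {X : Type*} [MeasurableSpace X] (κ : X → X → ℝ≥0∞)
    (μ : Measure X) (x : X) : ℝ≥0∞ :=
  ∫⁻ y, κ x y ∂μ

/-- The mutual energy of two positive measures relative to a kernel `κ`. -/
noncomputable def en {X : Type*} [MeasurableSpace X] (κ : X → X → ℝ≥0∞)
    (μ ν : Measure X) : ℝ≥0∞ :=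
  ∫⁻ x, ∫⁻ y, κ x y ∂ν ∂μ

/-- The mutual energy as a real number. -/
noncomputable def enR {X : Type*} [MeasurableSpace X] (κ : X → X → ℝ≥0∞)
    (μ ν : Measure X) : ℝ :=
  (en κ μ ν).toReal

/-- The mutual energy of two signed measures, given through their Jordan decompositions
`(ap, an)` and `(bp, bn)`. -/
noncomputable def enS {X : Type*} [MeasurableSpace X] (κ : X → X → ℝ≥0∞)
    (ap an bp bn : Measure X) : ℝ :=
  enR κ ap bp + enR κ an bn - enR κ ap bn - enR κ an bp

/-- The inner capacity of a set `Q` relative to the kernel `κ`. -/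
noncomputable def cap {X : Type*} [MeasurableSpace X] (κ : X → X → ℝ≥0∞)
    (Q : Set X) : ℝ≥0∞ :=
  (⨅ (μ : Measure X) (_ : μ Qᶜ = 0) (_ : μ Set.univ = 1) (_ : en κ μ μ ≠ ⊤),
    en κ μ μ)⁻¹

/-- The α-Green kernel of `D`, defined from the family `b` of α-Riesz balayages of Dirac
measures onto `Dᶜ`: `g(x,y) = κ_α(x,y) − κ_α(x, ε_y^{Dᶜ})`. -/
noncomputable def greenK (n : ℕ) (α : ℝ) (b : Rn n → Measure (Rn n)) (x y : Rn n) :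
    ℝ≥0∞ :=
  rieszK n α x y - pot (rieszK n α) (b y) x

lemma aux_inv_le (k A B : ℝ≥0∞) (hk0 : k ≠ 0) (hkt : k ≠ ⊤) (h : B ≤ k * A) :
    A⁻¹ ≤ k * B⁻¹ := by
  rcases eq_or_ne B 0 with hB | hB
  · simp [hB, ENNReal.mul_top hk0]
  · rw [ENNReal.inv_le_iff_inv_le, ENNReal.mul_inv (Or.inl hk0) (Or.inl hkt), inv_inv]
    calc k⁻¹ * B ≤ k⁻¹ * (k * A) := by gcongr
      _ = (k⁻¹ * k) * A := by rw [mul_assoc]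
      _ = A := by rw [ENNReal.inv_mul_cancel hk0 hkt, one_mul]

lemma riesz_inv (n : ℕ) (α : ℝ) (x y : Rn n) :
    rieszK n α x y = ((‖x - y‖₊ : ℝ≥0∞) ^ ((n : ℝ) - α))⁻¹ := by
  rw [rieszK, ← neg_sub ((n : ℝ)) α, ENNReal.rpow_neg]

open Metric in
/-- A signed measure `μ = μp − μn` on a domain `D ⊆ ℝⁿ` with `c_α(Dᶜ) > 0`, having compact
support contained in `D`, has finite α-Green energy iff its extension by zero has finite
α-Riesz energy. Here `b y` is the α-Riesz balayage of the Dirac measure at `y` onto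
`Dᶜ`, and `g` is the α-Green kernel defined from `b`. -/
theorem stmt11 (n : ℕ) (hn : 3 ≤ n) (α : ℝ) (hα : 0 < α) (hα2 : α ≤ 2)
    (D : Set (Rn n)) (hDopen : IsOpen D) (hDconn : IsConnected D)
    (hcap : cap (rieszK n α) Dᶜ ≠ 0)
    (b : Rn n → Measure (Rn n))
    (hbsupp : ∀ y ∈ D, (b y) D = 0)
    (hble : ∀ y ∈ D, ∀ x, pot (rieszK n α) (b y) x ≤ rieszK n α x y)
    (hbqe : ∀ y ∈ D, cap (rieszK n α)
      {x ∈ Dᶜ | pot (rieszK n α) (b y) x ≠ rieszK n α x y} = 0)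
    (μp μn : Measure (Rn n)) (K : Set (Rn n)) (hK : IsCompact K) (hKD : K ⊆ D)
    (hμpK : μp Kᶜ = 0) (hμnK : μn Kᶜ = 0) :
    (en (greenK n α b) μp μp ≠ ⊤ ∧ en (greenK n α b) μn μn ≠ ⊤ ∧
        en (greenK n α b) μp μn ≠ ⊤) ↔
      (en (rieszK n α) μp μp ≠ ⊤ ∧ en (rieszK n α) μn μn ≠ ⊤ ∧
        en (rieszK n α) μp μn ≠ ⊤) := by
  -- trivial case K = ∅
  rcases K.eq_empty_or_nonempty with rfl | hKne
  · have hp : μp = 0 := by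
      rw [← Measure.measure_univ_eq_zero, ← Set.compl_empty]; exact hμpK
    have hq : μn = 0 := by
      rw [← Measure.measure_univ_eq_zero, ← Set.compl_empty]; exact hμnK
    simp [hp, hq, en]
  have hnα : (0 : ℝ) < (n : ℝ) - α := by
    have : (3 : ℝ) ≤ n := by exact_mod_cast hn
    linarith
  obtain ⟨δ, hδpos, hδ⟩ := hK.exists_thickening_subset_open hDopen hKD
  obtain ⟨x, hxK⟩ := hKne
  obtain ⟨R, hR⟩ := hK.isBounded.subset_closedBall x
  have hR0 : 0 ≤ R := by simpa using hR hxK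
  -- a far point and a path
  have hn0 : 0 < n := by omega
  set v : Rn n := (R + δ) • EuclideanSpace.single (⟨0, hn0⟩ : Fin n) (1 : ℝ) with hv
  have hvnorm : ‖v‖ = R + δ := by
    rw [hv, norm_smul, EuclideanSpace.norm_single]
    simp [abs_of_nonneg (by linarith : (0:ℝ) ≤ R + δ)]
  set g : ℝ → Rn n := fun t => x + t • v with hg
  have hgc : Continuous g := by fun_prop
  have hfar : δ ≤ infDist (g 1) K := by
    by_contra h
    push_neg at h
    obtain ⟨y, hyK, hy⟩ := (infDist_lt_iff ⟨x, hxK⟩).mp h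
    have h2 : dist (g 1) x = R + δ := by
      rw [hg]; simp [dist_eq_norm, hvnorm]
    have h3 : dist y x ≤ R := by simpa [dist_comm] using hR hyK
    have h4 := dist_triangle (g 1) y x
    linarith
  have h0 : infDist (g 0) K = 0 := by
    have : g 0 = x := by simp [hg]
    rw [this]; exact infDist_zero_of_mem hxK
  have hc : ContinuousOn (fun t => infDist (g t) K) (Set.Icc (0:ℝ) 1) :=
    ((continuous_infDist_pt K).comp hgc).continuousOn
  obtain ⟨t, htI, hteq⟩ := intermediate_value_Icc (zero_le_one) hc
    (by constructor <;> [rw [h0]; skip] <;> [linarith; linarith] :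
      δ/2 ∈ Set.Icc (infDist (g 0) K) (infDist (g 1) K))
  set x₀ : Rn n := g t with hx₀
  have hx₀K : ∀ y ∈ K, δ/2 ≤ dist x₀ y := fun y hy => hteq ▸ infDist_le_dist_of_mem hy
  have hx₀D : x₀ ∈ D := hδ ((mem_thickening_iff_infDist_lt ⟨x, hxK⟩).mpr
    (by rw [show infDist x₀ K = δ/2 from hteq]; linarith))
  have hL : ∀ x' ∈ K, dist x₀ x' ≤ 2*R + δ := by
    intro x' hx'
    have h1 : dist x₀ x ≤ R + δ := by
      rw [hx₀, hg]
      simp only [dist_eq_norm, add_sub_cancel_left, norm_smul, hvnorm]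
      have ht0 : 0 ≤ t := htI.1
      have ht1 : t ≤ 1 := htI.2
      rw [Real.norm_eq_abs, abs_of_nonneg ht0]
      nlinarith
    have h2 : dist x x' ≤ R := by simpa [dist_comm] using hR hx'
    have := dist_triangle x₀ x x'
    linarith
  have hdist : ∀ x' ∈ K, ∀ z, z ∉ D → δ ≤ dist x' z := by
    intro x' hx' z hz
    by_contra h
    push_neg at h
    exact hz (hδ (mem_thickening_iff.mpr ⟨x', hx', by rwa [dist_comm]⟩))
  -- the comparison constant
  set cR : ℝ := (2*R + δ)/δ + 1 with hcR
  have hcR1 : 1 ≤ cR := by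
    have : 0 ≤ (2*R + δ)/δ := by positivity
    rw [hcR]; linarith
  set c' : ℝ≥0∞ := ENNReal.ofReal cR with hc'
  have hc'0 : c' ≠ 0 := by
    rw [hc']; simp [ENNReal.ofReal_eq_zero]; linarith
  have hc't : c' ≠ ⊤ := ENNReal.ofReal_ne_top
  set k : ℝ≥0∞ := c' ^ ((n:ℝ) - α) with hk
  have hk0 : k ≠ 0 := by
    rw [hk]
    exact (ENNReal.rpow_pos (by simpa [pos_iff_ne_zero] using hc'0) hc't).ne'
  have hkt : k ≠ ⊤ := ENNReal.rpow_ne_top_of_nonneg hnα.le hc't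
  -- pointwise kernel comparison
  have hcomp : ∀ x' ∈ K, ∀ z, z ∉ D → rieszK n α x' z ≤ k * rieszK n α x₀ z := by
    intro x' hx' z hz
    have hd1 : δ ≤ dist x' z := hdist x' hx' z hz
    have hd2 : dist x₀ z ≤ cR * dist x' z := by
      have h3 : 2*R + δ ≤ ((2*R+δ)/δ) * dist x' z := by
        rw [div_mul_eq_mul_div, le_div_iff₀ hδpos]
        nlinarith
      have h4 := dist_triangle x₀ x' z
      have h5 := hL x' hx'
      rw [hcR]; nlinarith
    have he : (‖x₀ - z‖₊ : ℝ≥0∞) ≤ c' * (‖x' - z‖₊ : ℝ≥0∞) := by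
      rw [← enorm_eq_nnnorm, ← ofReal_norm, ← enorm_eq_nnnorm, ← ofReal_norm, hc',
        ← ENNReal.ofReal_mul (by linarith), ← dist_eq_norm, ← dist_eq_norm]
      exact ENNReal.ofReal_le_ofReal hd2
    have h4 : ((‖x₀ - z‖₊ : ℝ≥0∞)) ^ ((n:ℝ)-α) ≤
        k * ((‖x' - z‖₊ : ℝ≥0∞)) ^ ((n:ℝ)-α) := by
      rw [hk, ← ENNReal.mul_rpow_of_ne_top hc't ENNReal.coe_ne_top]
      exact ENNReal.rpow_le_rpow he hnα.le
    rw [riesz_inv, riesz_inv]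
    exact aux_inv_le k _ _ hk0 hkt h4
  -- uniform bound on potentials
  set d2 : ℝ≥0∞ := ENNReal.ofReal (δ/2) with hd2
  have hd20 : d2 ≠ 0 := by rw [hd2]; simp [ENNReal.ofReal_eq_zero]; linarith
  set M : ℝ≥0∞ := k * (d2 ^ ((n:ℝ)-α))⁻¹ with hM
  have hMt : M ≠ ⊤ := by
    rw [hM]
    refine ENNReal.mul_ne_top hkt ?_
    rw [Ne, ENNReal.inv_eq_top]
    exact fun h => hd20 (by simpa [ENNReal.rpow_eq_zero_iff, hnα.not_gt, hnα] using h)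
  have hpotbound : ∀ y ∈ K, ∀ x' ∈ K, pot (rieszK n α) (b y) x' ≤ M := by
    intro y hy x' hx'
    have haeD : ∀ᵐ z ∂(b y), z ∉ D := by
      rw [ae_iff]
      have : {z : Rn n | ¬ z ∉ D} = D := by ext z; simp
      rw [this]; exact hbsupp y (hKD hy)
    calc pot (rieszK n α) (b y) x'
        ≤ ∫⁻ z, k * rieszK n α x₀ z ∂(b y) :=
          lintegral_mono_ae (haeD.mono fun z hz => hcomp x' hx' z hz)
      _ = k * pot (rieszK n α) (b y) x₀ := lintegral_const_mul' k _ hkt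
      _ ≤ k * rieszK n α x₀ y := by gcongr; exact hble y (hKD hy) x₀
      _ ≤ M := by
          rw [hM]
          gcongr
          rw [riesz_inv]
          refine ENNReal.inv_le_inv' (ENNReal.rpow_le_rpow ?_ hnα.le)
          rw [hd2, ← enorm_eq_nnnorm, ← ofReal_norm, ← dist_eq_norm]
          exact ENNReal.ofReal_le_ofReal (hx₀K y hy)
  -- easy direction
  have heasy : ∀ (μ ν : Measure (Rn n)), en (rieszK n α) μ ν ≠ ⊤ →
      en (greenK n α b) μ ν ≠ ⊤ := by
    intro μ ν h
    refine ne_top_of_le_ne_top h ?_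
    exact lintegral_mono fun x' => lintegral_mono fun y' => tsub_le_self
  -- mass finiteness from diagonal Green energies
  have hmassfin : ∀ (μ : Measure (Rn n)), μ Kᶜ = 0 → en (greenK n α b) μ μ ≠ ⊤ →
      μ Set.univ ≠ ⊤ := by
    intro μ hμc hgE
    -- choose r such that the Riesz kernel exceeds M + 1 at distance ≤ r
    have hM1 : (0:ℝ≥0∞) < (M+1)⁻¹ := by
      rw [ENNReal.inv_pos]
      exact ENNReal.add_ne_top.mpr ⟨hMt, ENNReal.one_ne_top⟩
    have hM1t : (M+1)⁻¹ ≠ ⊤ := by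
      rw [Ne, ENNReal.inv_eq_top]
      intro h
      have : (1:ℝ≥0∞) ≤ M + 1 := le_add_self
      rw [h] at this
      exact one_ne_zero (le_zero_iff.mp this)
    set rE : ℝ≥0∞ := (M+1)⁻¹ ^ (((n:ℝ)-α)⁻¹) with hrE
    have hrE0 : rE ≠ 0 := (ENNReal.rpow_pos hM1 hM1t).ne'
    have hrEt : rE ≠ ⊤ := ENNReal.rpow_ne_top_of_nonneg (by positivity) hM1t
    have hrEpow : rE ^ ((n:ℝ)-α) = (M+1)⁻¹ := by
      rw [hrE, ← ENNReal.rpow_mul, inv_mul_cancel₀ hnα.ne', ENNReal.rpow_one]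
    set r : ℝ := rE.toReal with hrdef
    have hrpos : 0 < r := ENNReal.toReal_pos hrE0 hrEt
    have hr : ∀ x' ∈ K, ∀ y' ∈ K, dist x' y' ≤ r → M + 1 ≤ rieszK n α x' y' := by
      intro x' _ y' _ hd
      rw [riesz_inv, ENNReal.le_inv_iff_le_inv]
      rw [← hrEpow]
      refine ENNReal.rpow_le_rpow ?_ hnα.le
      rw [← enorm_eq_nnnorm, ← ofReal_norm, ← dist_eq_norm, ← ENNReal.ofReal_toReal hrEt]
      exact ENNReal.ofReal_le_ofReal hd
    -- cover K by finitely many balls of radius r/2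
    obtain ⟨T, hTK, hTfin, hTcover⟩ := hK.finite_cover_balls (half_pos hrpos)
    by_contra hμt
    have hμK : μ K = ⊤ := by
      have h6 := measure_add_measure_compl (μ := μ) hK.measurableSet
      rw [hμc, add_zero, hμt] at h6
      exact h6
    have hball : ∃ c ∈ T, μ (K ∩ ball c (r/2)) = ⊤ := by
      by_contra hfin
      push_neg at hfin
      have h7 : μ K ≤ ∑ c ∈ hTfin.toFinset, μ (K ∩ ball c (r/2)) := by
        calc μ K ≤ μ (⋃ c ∈ hTfin.toFinset, K ∩ ball c (r/2)) := by
              refine measure_mono fun z hz => ?_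
              obtain ⟨c, hc1, hc2⟩ := Set.mem_iUnion₂.mp (hTcover hz)
              exact Set.mem_iUnion₂.mpr ⟨c, hTfin.mem_toFinset.mpr hc1, hz, hc2⟩
          _ ≤ ∑ c ∈ hTfin.toFinset, μ (K ∩ ball c (r/2)) := measure_biUnion_finset_le _ _
      have h8 : ∑ c ∈ hTfin.toFinset, μ (K ∩ ball c (r/2)) < ⊤ := by
        refine ENNReal.sum_lt_top.mpr fun c hc => ?_
        exact (hfin c (hTfin.mem_toFinset.mp hc)).lt_top
      rw [hμK] at h7
      exact (h8.trans_le (le_trans h7 (le_refl _))).ne rfl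
    obtain ⟨cc, hcT, hcc⟩ := hball
    set S : Set (Rn n) := K ∩ ball cc (r/2) with hS
    have hSm : MeasurableSet S := hK.measurableSet.inter measurableSet_ball
    have hgreen1 : ∀ x' ∈ S, ∀ y' ∈ S, 1 ≤ greenK n α b x' y' := by
      intro x' hx' y' hy'
      have hd : dist x' y' ≤ r := by
        have h1 := mem_ball.mp hx'.2
        have h2 := mem_ball.mp hy'.2
        have h3 := dist_triangle x' cc y'
        have h4 : dist cc y' = dist y' cc := dist_comm _ _
        linarith
      have h5 : M + 1 ≤ rieszK n α x' y' := hr x' hx'.1 y' hy'.1 hd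
      have h6 : pot (rieszK n α) (b y') x' ≤ M := hpotbound y' hy'.1 x' hx'.1
      calc (1:ℝ≥0∞) = M + 1 - M := by
            rw [add_comm, ENNReal.add_sub_cancel_right hMt]
        _ ≤ rieszK n α x' y' - pot (rieszK n α) (b y') x' := tsub_le_tsub h5 h6
        _ = greenK n α b x' y' := rfl
    have hlow : μ S * μ S ≤ en (greenK n α b) μ μ := by
      calc μ S * μ S = ∫⁻ _ in S, μ S ∂μ := by rw [setLIntegral_const, mul_comm]
        _ ≤ ∫⁻ x' in S, ∫⁻ y' in S, greenK n α b x' y' ∂μ ∂μ := by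
            refine setLIntegral_mono' hSm fun x' hx' => ?_
            calc μ S = ∫⁻ _ in S, 1 ∂μ := by rw [setLIntegral_one]
              _ ≤ ∫⁻ y' in S, greenK n α b x' y' ∂μ :=
                setLIntegral_mono' hSm fun y' hy' => hgreen1 x' hx' y' hy'
        _ ≤ ∫⁻ x' in S, ∫⁻ y', greenK n α b x' y' ∂μ ∂μ :=
            setLIntegral_mono' hSm fun x' _ => setLIntegral_le_lintegral _ _
        _ ≤ en (greenK n α b) μ μ := setLIntegral_le_lintegral _ _
    rw [hcc] at hlow
    exact hgE (top_le_iff.mp (by simpa using hlow))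
  -- hard direction core
  have hhard : ∀ (μ ν : Measure (Rn n)), μ Kᶜ = 0 → ν Kᶜ = 0 →
      μ Set.univ ≠ ⊤ → ν Set.univ ≠ ⊤ → en (greenK n α b) μ ν ≠ ⊤ →
      en (rieszK n α) μ ν ≠ ⊤ := by
    intro μ ν hμc hνc hμt hνt hgE
    have haeK : ∀ᵐ x' ∂μ, x' ∈ K := by
      rw [ae_iff]
      have : {z : Rn n | ¬ z ∈ K} = Kᶜ := rfl
      rw [this]; exact hμc
    have haeKν : ∀ᵐ y' ∂ν, y' ∈ K := by
      rw [ae_iff]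
      have : {z : Rn n | ¬ z ∈ K} = Kᶜ := rfl
      rw [this]; exact hνc
    have step : en (rieszK n α) μ ν ≤ en (greenK n α b) μ ν +
        M * ν Set.univ * μ Set.univ := by
      rw [en, en]
      have h1 : ∀ x' ∈ K, ∫⁻ y', rieszK n α x' y' ∂ν ≤
          (∫⁻ y', greenK n α b x' y' ∂ν) + M * ν Set.univ := by
        intro x' hx'
        calc ∫⁻ y', rieszK n α x' y' ∂ν
            ≤ ∫⁻ y', (greenK n α b x' y' + M) ∂ν := by
              refine lintegral_mono_ae (haeKν.mono fun y' hy' => ?_)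
              calc rieszK n α x' y'
                  ≤ rieszK n α x' y' - pot (rieszK n α) (b y') x' +
                      pot (rieszK n α) (b y') x' := le_tsub_add
                _ ≤ greenK n α b x' y' + M :=
                    add_le_add_right (hpotbound y' hy' x' hx') _
          _ = (∫⁻ y', greenK n α b x' y' ∂ν) + M * ν Set.univ := by
              rw [lintegral_add_right _ measurable_const, lintegral_const]
      calc ∫⁻ x', ∫⁻ y', rieszK n α x' y' ∂ν ∂μ
          ≤ ∫⁻ x', ((∫⁻ y', greenK n α b x' y' ∂ν) + M * ν Set.univ) ∂μ :=
            lintegral_mono_ae (haeK.mono fun x' hx' => h1 x' hx')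
        _ = (∫⁻ x', ∫⁻ y', greenK n α b x' y' ∂ν ∂μ) + M * ν Set.univ * μ Set.univ := by
            rw [lintegral_add_right _ measurable_const, lintegral_const]
    refine ne_top_of_le_ne_top ?_ step
    exact ENNReal.add_ne_top.mpr ⟨hgE,
      ENNReal.mul_ne_top (ENNReal.mul_ne_top hMt hνt) hμt⟩
  constructor
  · rintro ⟨h1, h2, h3⟩
    have m1 := hmassfin μp hμpK h1
    have m2 := hmassfin μn hμnK h2
    exact ⟨hhard μp μp hμpK hμpK m1 m1 h1, hhard μn μn hμnK hμnK m2 m2 h2,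
      hhard μp μn hμpK hμnK m1 m2 h3⟩
  · rintro ⟨h1, h2, h3⟩
    exact ⟨heasy _ _ h1, heasy _ _ h2, heasy _ _ h3⟩
end

section
/- Let D ⊊ ℝⁿ be a domain (n ≥ 3, 0 < α ≤ 2) with Dᶜ not α-thin at infinity, and suppose the relatively closed set A₁ ⊆ D satisfies c_α(A₁) = ∞. Then there exists a positive Radon measure ξ on ℝⁿ carried by A₁ with finite α-Riesz energy (‖ξ‖_α < ∞) and infinite total mass ξ(A₁) = ∞. (Construction: choose radii r_ℓ ↑ ∞ and measures ξ_ℓ ∈ E⁺_α(A₁ \ B(0, r_ℓ)) of unit mass with ‖ξ_ℓ‖_α ≤ ℓ^{−2} and pairwise 'escaping' compact supports; then ξ := Σ_ℓ ξ_ℓ works.) -/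
open MeasureTheory
open scoped ENNReal

open Metric

section EnAux

variable {X : Type*} [MeasurableSpace X]

lemma en_mono' (κ : X → X → ℝ≥0∞)
    {μ ν μ' ν' : Measure X} (hμ : μ' ≤ μ) (hν : ν' ≤ ν) : en κ μ' ν' ≤ en κ μ ν :=
  lintegral_mono' hμ fun _x => lintegral_mono' hν le_rfl

lemma restrict_self' {μ : Measure X} {S : Set X}
    (h : μ Sᶜ = 0) : μ.restrict S = μ :=
  Measure.restrict_eq_self_of_ae_mem (by
    rw [MeasureTheory.ae_iff]; exact h)

lemma en_le_bound (κ : X → X → ℝ≥0∞)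
    {μ ν : Measure X} {S T : Set X} {c : ℝ≥0∞}
    (hS : MeasurableSet S) (hT : MeasurableSet T)
    (hμ : μ Sᶜ = 0) (hν : ν Tᶜ = 0)
    (hκ : ∀ x ∈ S, ∀ y ∈ T, κ x y ≤ c) :
    en κ μ ν ≤ c * μ Set.univ * ν Set.univ := by
  have h1 : en κ μ ν = ∫⁻ x in S, ∫⁻ y in T, κ x y ∂ν ∂μ := by
    calc en κ μ ν = ∫⁻ x, ∫⁻ y in T, κ x y ∂ν ∂μ :=
          lintegral_congr fun x => by rw [restrict_self' hν]
      _ = ∫⁻ x in S, ∫⁻ y in T, κ x y ∂ν ∂μ := by rw [restrict_self' hμ]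
  rw [h1]
  calc ∫⁻ x in S, ∫⁻ y in T, κ x y ∂ν ∂μ
      ≤ ∫⁻ _x in S, c * ν T ∂μ := by
        refine setLIntegral_mono' hS fun x hx => ?_
        calc ∫⁻ y in T, κ x y ∂ν ≤ ∫⁻ _y in T, c ∂ν :=
              setLIntegral_mono' hT fun y hy => hκ x hx y hy
          _ = c * ν T := setLIntegral_const T c
    _ = c * ν T * μ S := setLIntegral_const S _
    _ ≤ c * ν Set.univ * μ Set.univ := by
        gcongr <;> exact Set.subset_univ _
    _ = c * μ Set.univ * ν Set.univ := by ring

lemma univ_eq_of_null_compl {ν : Measure X} {S : Set X}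
    (hν : ν Sᶜ = 0) : ν Set.univ = ν S := by
  rw [← Measure.restrict_apply_univ S, restrict_self' hν]

lemma en_ge_bound (κ : X → X → ℝ≥0∞)
    {ν : Measure X} {S : Set X} {c : ℝ≥0∞}
    (hS : MeasurableSet S) (hν : ν Sᶜ = 0)
    (hκ : ∀ x ∈ S, ∀ y ∈ S, c ≤ κ x y) :
    c * ν Set.univ * ν Set.univ ≤ en κ ν ν := by
  have h1 : en κ ν ν = ∫⁻ x in S, ∫⁻ y in S, κ x y ∂ν ∂ν := by
    calc en κ ν ν = ∫⁻ x, ∫⁻ y in S, κ x y ∂ν ∂ν :=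
          lintegral_congr fun x => by rw [restrict_self' hν]
      _ = ∫⁻ x in S, ∫⁻ y in S, κ x y ∂ν ∂ν := by rw [restrict_self' hν]
  rw [h1, univ_eq_of_null_compl hν]
  calc c * ν S * ν S = ∫⁻ _x in S, c * ν S ∂ν := by rw [setLIntegral_const]
    _ ≤ ∫⁻ x in S, ∫⁻ y in S, κ x y ∂ν ∂ν := by
        refine setLIntegral_mono' hS fun x hx => ?_
        calc c * ν S = ∫⁻ _y in S, c ∂ν := (setLIntegral_const S c).symm
          _ ≤ ∫⁻ y in S, κ x y ∂ν := setLIntegral_mono' hS fun y hy => hκ x hx y hy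

end EnAux

lemma rieszK_symm' (n : ℕ) (α : ℝ) (x y : Rn n) : rieszK n α x y = rieszK n α y x := by
  rw [rieszK, rieszK]
  congr 2
  rw [← neg_sub, nnnorm_neg]

lemma rieszK_meas (n : ℕ) (α : ℝ) : Measurable (Function.uncurry (rieszK n α)) := by
  have h1 : Continuous fun p : Rn n × Rn n => ((‖p.1 - p.2‖₊ : NNReal) : ℝ≥0∞) :=
    ENNReal.continuous_coe.comp (continuous_fst.sub continuous_snd).nnnorm
  exact (ENNReal.continuous_rpow_const.comp h1).measurable

lemma rieszK_ge (n : ℕ) (hn : 3 ≤ n) {α : ℝ} (hα2 : α ≤ 2) {r : ℝ} {x y : Rn n}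
    (hx : x ∈ closedBall 0 r) (hy : y ∈ closedBall 0 r) :
    ((ENNReal.ofReal (2 * r)) ^ ((n : ℝ) - α))⁻¹ ≤ rieszK n α x y := by
  have hn3 : (3 : ℝ) ≤ n := by exact_mod_cast hn
  have hnα : 0 ≤ (n : ℝ) - α := by linarith
  have hb : (‖x - y‖₊ : ℝ≥0∞) ≤ ENNReal.ofReal (2 * r) := by
    rw [← enorm_eq_nnnorm, ← ofReal_norm]
    apply ENNReal.ofReal_le_ofReal
    have hx' := mem_closedBall_zero_iff.mp hx
    have hy' := mem_closedBall_zero_iff.mp hy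
    calc ‖x - y‖ ≤ ‖x‖ + ‖y‖ := norm_sub_le x y
      _ ≤ 2 * r := by linarith
  have hre : rieszK n α x y = ((‖x - y‖₊ : ℝ≥0∞) ^ ((n : ℝ) - α))⁻¹ := by
    rw [rieszK, ← ENNReal.rpow_neg]
    congr 1
    ring
  rw [hre]
  gcongr

lemma rieszK_le (n : ℕ) (hn : 3 ≤ n) {α : ℝ} (hα2 : α ≤ 2) {x y : Rn n} {d : ℝ≥0∞}
    (hd1 : 1 ≤ d) (h : d ≤ (‖x - y‖₊ : ℝ≥0∞)) : rieszK n α x y ≤ d⁻¹ := by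
  have hn3 : (3 : ℝ) ≤ n := by exact_mod_cast hn
  have he : α - (n : ℝ) ≤ -1 := by linarith
  have h1 : rieszK n α x y ≤ (‖x - y‖₊ : ℝ≥0∞) ^ (-1 : ℝ) := by
    rw [rieszK]
    exact ENNReal.rpow_le_rpow_of_exponent_le (hd1.trans h) he
  calc rieszK n α x y ≤ (‖x - y‖₊ : ℝ≥0∞) ^ (-1 : ℝ) := h1
    _ = ((‖x - y‖₊ : ℝ≥0∞))⁻¹ := ENNReal.rpow_neg_one _
    _ ≤ d⁻¹ := by gcongr

/-- If `D ⊊ ℝⁿ` is a domain (`n ≥ 3`, `0 < α ≤ 2`) whose complement is not α-thin at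
infinity (balayage onto `Dᶜ` preserves total mass of bounded measures), and `A₁ ⊆ D` is
relatively closed in `D` with `c_α(A₁) = ∞`, then there exists a positive Radon measure
`ξ` carried by `A₁` with finite α-Riesz energy and infinite total mass. -/
theorem stmt16 (n : ℕ) (hn : 3 ≤ n) (α : ℝ) (hα : 0 < α) (hα2 : α ≤ 2)
    (D : Set (Rn n)) (hDopen : IsOpen D) (hDconn : IsConnected D)
    (hDne : D ≠ Set.univ)
    (b : Rn n → Measure (Rn n))
    (hbsupp : ∀ y ∈ D, (b y) D = 0)
    (hble : ∀ y ∈ D, ∀ x, pot (rieszK n α) (b y) x ≤ rieszK n α x y)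
    (hbqe : ∀ y ∈ D, cap (rieszK n α)
      {x ∈ Dᶜ | pot (rieszK n α) (b y) x ≠ rieszK n α x y} = 0)
    -- `Dᶜ` is not α-thin at infinity: balayage preserves total mass of bounded measures
    (hthin : ∀ μ : Measure (Rn n), μ Dᶜ = 0 → IsFiniteMeasure μ →
      (μ.bind b) Set.univ = μ Set.univ)
    (A₁ : Set (Rn n)) (hA₁ : ∃ F : Set (Rn n), IsClosed F ∧ A₁ = F ∩ D)
    (hcapA : cap (rieszK n α) A₁ = ⊤) :
    ∃ ξ : Measure (Rn n), ξ A₁ᶜ = 0 ∧ en (rieszK n α) ξ ξ ≠ ⊤ ∧ ξ A₁ = ⊤ := by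
  classical
  obtain ⟨Fc, hFc, hA₁eq⟩ := hA₁
  have hA₁m : MeasurableSet A₁ := by
    rw [hA₁eq]; exact hFc.measurableSet.inter hDopen.measurableSet
  set κ : Rn n → Rn n → ℝ≥0∞ := rieszK n α with hκdef
  -- the infimum of energies of unit measures on A₁ is zero
  have hinf : (⨅ (μ : Measure (Rn n)) (_ : μ A₁ᶜ = 0) (_ : μ Set.univ = 1)
      (_ : en κ μ μ ≠ ⊤), en κ μ μ) = 0 := by
    rwa [cap, ENNReal.inv_eq_top] at hcapA
  have hsmall : ∀ δ : ℝ≥0∞, δ ≠ 0 → ∃ μ : Measure (Rn n),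
      μ A₁ᶜ = 0 ∧ μ Set.univ = 1 ∧ en κ μ μ < δ := by
    intro δ hδ
    have h0 := hinf.le.trans_lt (pos_iff_ne_zero.mpr hδ)
    obtain ⟨μ, h1⟩ := iInf_lt_iff.mp h0
    obtain ⟨p1, h2⟩ := iInf_lt_iff.mp h1
    obtain ⟨p2, h3⟩ := iInf_lt_iff.mp h2
    obtain ⟨_, h4⟩ := iInf_lt_iff.mp h3
    exact ⟨μ, p1, p2, h4⟩
  -- selection of small-energy chunks escaping to infinity
  have sel : ∀ (r : ℝ) (k : ℕ), ∃ p : Measure (Rn n) × ℝ,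
      r ≤ p.2 ∧ p.1 A₁ᶜ = 0 ∧ p.1 (closedBall 0 r) = 0 ∧
      p.1 (closedBall 0 p.2)ᶜ = 0 ∧ 2⁻¹ ≤ p.1 Set.univ ∧ p.1 Set.univ ≤ 1 ∧
      en κ p.1 p.1 ≤ 2⁻¹ ^ k * 2⁻¹ ^ k := by
    intro r k
    set r' : ℝ := max r 1 with hr'def
    have hr'1 : (1 : ℝ) ≤ r' := le_max_right _ _
    set B : Set (Rn n) := closedBall 0 r' with hBdef
    have hBm : MeasurableSet B := measurableSet_closedBall
    set c : ℝ≥0∞ := ((ENNReal.ofReal (2 * r')) ^ ((n : ℝ) - α))⁻¹ with hcdef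
    have hn3 : (3 : ℝ) ≤ n := by exact_mod_cast hn
    have hc0 : c ≠ 0 := by
      rw [hcdef, ne_eq, ENNReal.inv_eq_zero]
      exact (ENNReal.rpow_lt_top_of_nonneg (by linarith) ENNReal.ofReal_ne_top).ne
    have hctop : c ≠ ⊤ := by
      rw [hcdef, ne_eq, ENNReal.inv_eq_top]
      exact (ENNReal.rpow_pos (ENNReal.ofReal_pos.mpr (by linarith)) ENNReal.ofReal_ne_top).ne'
    set δ : ℝ≥0∞ := min (2⁻¹ ^ k * 2⁻¹ ^ k) (c * (4⁻¹ * 4⁻¹)) with hδdef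
    have hδ0 : δ ≠ 0 := by
      rw [← pos_iff_ne_zero, hδdef, lt_min_iff]
      constructor
      · rw [pos_iff_ne_zero]
        exact mul_ne_zero (pow_ne_zero _ (by simp)) (pow_ne_zero _ (by simp))
      · rw [pos_iff_ne_zero]
        exact mul_ne_zero hc0 (by simp)
    obtain ⟨μ, hμA, hμ1, hμen⟩ := hsmall δ hδ0
    have hresnull : (μ.restrict B) Bᶜ = 0 := by
      rw [Measure.restrict_apply hBm.compl, Set.compl_inter_self]
      exact measure_empty
    have hker_ge : ∀ x ∈ B, ∀ y ∈ B, c ≤ κ x y := fun x hx y hy =>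
      rieszK_ge n hn hα2 hx hy
    have hge := en_ge_bound κ hBm hresnull hker_ge
    rw [Measure.restrict_apply_univ] at hge
    have hlt : c * (μ B * μ B) < c * (4⁻¹ * 4⁻¹) := by
      rw [← mul_assoc]
      calc c * μ B * μ B ≤ en κ (μ.restrict B) (μ.restrict B) := hge
        _ ≤ en κ μ μ := en_mono' κ Measure.restrict_le_self Measure.restrict_le_self
        _ < δ := hμen
        _ ≤ c * (4⁻¹ * 4⁻¹) := min_le_right _ _
    have hm2 : μ B * μ B < 4⁻¹ * 4⁻¹ := (ENNReal.mul_lt_mul_iff_right hc0 hctop).mp hlt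
    have hm : μ B ≤ 4⁻¹ := by
      by_contra hcon
      push_neg at hcon
      exact absurd hm2 (not_lt.mpr (mul_le_mul' hcon.le hcon.le))
    have houtlow : 2⁻¹ < μ Bᶜ := by
      have hun : μ Set.univ ≤ μ B + μ Bᶜ := by
        rw [← Set.union_compl_self B]
        exact measure_union_le _ _
      rw [hμ1] at hun
      by_contra hcon
      push_neg at hcon
      have h14 : (1 : ℝ≥0∞) ≤ 4⁻¹ + 2⁻¹ := hun.trans (add_le_add hm hcon)
      have hlt1 : (4⁻¹ : ℝ≥0∞) + 2⁻¹ < 1 := by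
        have h4 : (4⁻¹ : ℝ≥0∞) = ENNReal.ofReal (1/4) := by
          rw [ENNReal.ofReal_div_of_pos (by norm_num), ENNReal.ofReal_one,
            ENNReal.ofReal_ofNat, one_div]
        have h2 : (2⁻¹ : ℝ≥0∞) = ENNReal.ofReal (1/2) := by
          rw [ENNReal.ofReal_div_of_pos (by norm_num), ENNReal.ofReal_one,
            ENNReal.ofReal_ofNat, one_div]
        rw [h4, h2, ← ENNReal.ofReal_add (by norm_num) (by norm_num), ← ENNReal.ofReal_one,
          ENNReal.ofReal_lt_ofReal_iff (by norm_num)]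
        norm_num
      exact absurd (h14.trans_lt hlt1) (lt_irrefl _)
    set μo : Measure (Rn n) := μ.restrict Bᶜ with hμodef
    have hμouniv : μo Set.univ = μ Bᶜ := Measure.restrict_apply_univ _
    have hsup : μo Set.univ = ⨆ j : ℕ, μo (closedBall 0 (j : ℝ)) := by
      have hmono : Monotone fun j : ℕ => closedBall (0 : Rn n) (j : ℝ) :=
        fun a b hab => closedBall_subset_closedBall (by exact_mod_cast hab)
      rw [← iUnion_closedBall_nat (0 : Rn n)]
      exact hmono.directed_le.measure_iUnion
    have hlt2 : 2⁻¹ < ⨆ j : ℕ, μo (closedBall 0 (j : ℝ)) := by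
      rw [← hsup, hμouniv]; exact houtlow
    obtain ⟨j, hj⟩ := lt_iSup_iff.mp hlt2
    set R : ℝ := max (j : ℝ) r' with hRdef
    set Bj : Set (Rn n) := closedBall 0 (j : ℝ) with hBjdef
    set ν : Measure (Rn n) := μo.restrict Bj with hνdef
    have hνle : ν ≤ μ := Measure.restrict_le_self.trans Measure.restrict_le_self
    have hνuniv : ν Set.univ = μo Bj := Measure.restrict_apply_univ _
    refine ⟨(ν, R), (le_max_left r 1).trans (le_max_right _ _), ?_, ?_, ?_, ?_, ?_, ?_⟩
    · exact le_antisymm ((Measure.le_iff'.mp hνle A₁ᶜ).trans hμA.le) (zero_le)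
    · have h1 : ν B = 0 := by
        refine le_antisymm ?_ (zero_le)
        calc ν B ≤ μo B := Measure.le_iff'.mp Measure.restrict_le_self B
          _ = μ (B ∩ Bᶜ) := Measure.restrict_apply hBm
          _ = 0 := by rw [Set.inter_compl_self]; exact measure_empty
      refine le_antisymm ?_ (zero_le)
      calc ν (closedBall 0 r) ≤ ν B :=
            measure_mono (closedBall_subset_closedBall (le_max_left r 1))
        _ = 0 := h1
    · have h1 : ν Bjᶜ = 0 := by
        rw [hνdef, Measure.restrict_apply measurableSet_closedBall.compl,
          Set.compl_inter_self]
        exact measure_empty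
      refine le_antisymm ?_ (zero_le)
      calc ν (closedBall 0 R)ᶜ ≤ ν Bjᶜ := measure_mono
            (Set.compl_subset_compl.mpr (closedBall_subset_closedBall (le_max_left _ _)))
        _ = 0 := h1
    · rw [hνuniv]; exact hj.le
    · exact (Measure.le_iff'.mp hνle Set.univ).trans hμ1.le
    · exact (en_mono' κ hνle hνle).trans (hμen.le.trans (min_le_left _ _))
  choose sel' hsel' using sel
  -- the recursively chosen sequence
  let F : ℕ → Measure (Rn n) × ℝ := fun k =>
    Nat.rec (sel' 1 0) (fun m ih => sel' (ih.2 + 4 ^ (m + 1)) (m + 1)) k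
  let ν : ℕ → Measure (Rn n) := fun k => (F k).1
  let Rs : ℕ → ℝ := fun k => (F k).2
  let rfun : ℕ → ℝ := fun k => Nat.casesOn k 1 fun m => Rs m + 4 ^ (m + 1)
  have hP : ∀ k, rfun k ≤ Rs k ∧ ν k A₁ᶜ = 0 ∧ ν k (closedBall 0 (rfun k)) = 0 ∧
      ν k (closedBall 0 (Rs k))ᶜ = 0 ∧ 2⁻¹ ≤ ν k Set.univ ∧ ν k Set.univ ≤ 1 ∧
      en κ (ν k) (ν k) ≤ 2⁻¹ ^ k * 2⁻¹ ^ k := by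
    intro k
    cases k with
    | zero => exact hsel' 1 0
    | succ m => exact hsel' (Rs m + 4 ^ (m + 1)) (m + 1)
  have hRmono : Monotone Rs := by
    apply monotone_nat_of_le_succ
    intro k
    have h4 : (0 : ℝ) < 4 ^ (k + 1) := by positivity
    have := (hP (k + 1)).1
    calc Rs k ≤ Rs k + 4 ^ (k + 1) := by linarith
      _ ≤ Rs (k + 1) := this
  -- separation estimate
  have hsep : ∀ i m : ℕ, i ≤ m → ∀ x y : Rn n, x ∈ closedBall 0 (Rs i) →
      y ∉ closedBall 0 (Rs m + 4 ^ (m + 1)) → κ x y ≤ 2⁻¹ ^ i * 2⁻¹ ^ (m + 1) := by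
    intro i m him x y hx hy
    have hx' : ‖x‖ ≤ Rs i := mem_closedBall_zero_iff.mp hx
    have hy' : Rs m + 4 ^ (m + 1) < ‖y‖ := by
      rw [mem_closedBall_zero_iff, not_le] at hy
      exact hy
    have hRsle : Rs i ≤ Rs m := hRmono him
    have h2le4 : (2 : ℝ) ^ (i + (m + 1)) ≤ 4 ^ (m + 1) := by
      have h1 : (4 : ℝ) ^ (m + 1) = 2 ^ (2 * (m + 1)) := by
        rw [pow_mul]; norm_num
      rw [h1]
      exact pow_le_pow_right₀ one_le_two (by omega)
    have hdist : (2 : ℝ) ^ (i + (m + 1)) ≤ ‖x - y‖ := by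
      have h1 : ‖y‖ - ‖x‖ ≤ ‖x - y‖ := by
        rw [norm_sub_rev]
        exact norm_sub_norm_le y x
      have : (2 : ℝ) ^ (i + (m + 1)) ≤ ‖y‖ - ‖x‖ := by
        have := hy'.le
        linarith
      linarith
    have hdE : ((2 : ℝ≥0∞) ^ (i + (m + 1)) : ℝ≥0∞) ≤ (‖x - y‖₊ : ℝ≥0∞) := by
      rw [← enorm_eq_nnnorm, ← ofReal_norm,
        show ((2 : ℝ≥0∞) ^ (i + (m + 1))) = ENNReal.ofReal ((2 : ℝ) ^ (i + (m + 1))) by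
          rw [ENNReal.ofReal_pow (by norm_num : (0:ℝ) ≤ 2), ENNReal.ofReal_ofNat]]
      exact ENNReal.ofReal_le_ofReal hdist
    have h1d : (1 : ℝ≥0∞) ≤ (2 : ℝ≥0∞) ^ (i + (m + 1)) := one_le_pow₀ one_le_two
    have := rieszK_le n hn hα2 h1d hdE
    calc κ x y ≤ ((2 : ℝ≥0∞) ^ (i + (m + 1)))⁻¹ := this
      _ = 2⁻¹ ^ i * 2⁻¹ ^ (m + 1) := by
        rw [pow_add, ENNReal.mul_inv (Or.inl (pow_ne_zero _ (by norm_num)))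
          (Or.inl (ENNReal.pow_ne_top (by norm_num))), ENNReal.inv_pow, ENNReal.inv_pow]
  -- cross energy bound
  have hcross : ∀ i j : ℕ, en κ (ν i) (ν j) ≤ 2⁻¹ ^ i * 2⁻¹ ^ j := by
    intro i j
    rcases lt_trichotomy i j with h | rfl | h
    · obtain ⟨m, rfl⟩ : ∃ m, j = m + 1 := ⟨j - 1, by omega⟩
      have him : i ≤ m := by omega
      have hb := en_le_bound κ (S := closedBall 0 (Rs i))
        (T := (closedBall 0 (Rs m + 4 ^ (m + 1)))ᶜ)
        measurableSet_closedBall measurableSet_closedBall.compl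
        (hP i).2.2.2.1 (by rw [compl_compl]; exact (hP (m + 1)).2.2.1)
        (fun x hx y hy => hsep i m him x y hx hy)
      calc en κ (ν i) (ν (m + 1)) ≤ 2⁻¹ ^ i * 2⁻¹ ^ (m + 1) * ν i Set.univ *
            ν (m + 1) Set.univ := hb
        _ ≤ 2⁻¹ ^ i * 2⁻¹ ^ (m + 1) * 1 * 1 := by
            gcongr
            exacts [(hP i).2.2.2.2.2.1, (hP (m + 1)).2.2.2.2.2.1]
        _ = 2⁻¹ ^ i * 2⁻¹ ^ (m + 1) := by ring
    · exact (hP i).2.2.2.2.2.2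
    · obtain ⟨m, rfl⟩ : ∃ m, i = m + 1 := ⟨i - 1, by omega⟩
      have hjm : j ≤ m := by omega
      have hb := en_le_bound κ (S := (closedBall 0 (Rs m + 4 ^ (m + 1)))ᶜ)
        (T := closedBall 0 (Rs j))
        measurableSet_closedBall.compl measurableSet_closedBall
        (by rw [compl_compl]; exact (hP (m + 1)).2.2.1) (hP j).2.2.2.1
        (fun x hx y hy => by
          rw [hκdef, rieszK_symm' n α x y]
          exact hsep j m hjm y x hy hx)
      calc en κ (ν (m + 1)) (ν j) ≤ 2⁻¹ ^ j * 2⁻¹ ^ (m + 1) * ν (m + 1) Set.univ *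
            ν j Set.univ := hb
        _ ≤ 2⁻¹ ^ j * 2⁻¹ ^ (m + 1) * 1 * 1 := by
            gcongr
            exacts [(hP (m + 1)).2.2.2.2.2.1, (hP j).2.2.2.2.2.1]
        _ = 2⁻¹ ^ (m + 1) * 2⁻¹ ^ j := by ring
  -- assemble
  set ξ : Measure (Rn n) := Measure.sum ν with hξdef
  have hfin : ∀ i, IsFiniteMeasure (ν i) :=
    fun i => ⟨lt_of_le_of_lt (hP i).2.2.2.2.2.1 ENNReal.one_lt_top⟩
  have hξnull : ξ A₁ᶜ = 0 := by
    rw [hξdef, Measure.sum_apply _ hA₁m.compl]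
    simp [(fun i => (hP i).2.1)]
  have hmass : ξ Set.univ = ⊤ := by
    rw [hξdef, Measure.sum_apply _ MeasurableSet.univ]
    have h1 : ∑' _i : ℕ, (2⁻¹ : ℝ≥0∞) ≤ ∑' i, ν i Set.univ :=
      ENNReal.tsum_le_tsum fun i => (hP i).2.2.2.2.1
    rw [ENNReal.tsum_const_eq_top_of_ne_zero (by simp : (2⁻¹ : ℝ≥0∞) ≠ 0)] at h1
    exact top_le_iff.mp h1
  have hen : en κ ξ ξ = ∑' i, ∑' j, en κ (ν i) (ν j) := by
    calc en κ ξ ξ = ∫⁻ x, ∑' j, ∫⁻ y, κ x y ∂ν j ∂ξ :=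
          lintegral_congr fun x => lintegral_sum_measure _ ν
      _ = ∑' i, ∫⁻ x, ∑' j, ∫⁻ y, κ x y ∂ν j ∂ν i := lintegral_sum_measure _ ν
      _ = ∑' i, ∑' j, ∫⁻ x, ∫⁻ y, κ x y ∂ν j ∂ν i := by
          refine tsum_congr fun i => lintegral_tsum fun j => ?_
          haveI := hfin j
          exact ((rieszK_meas n α).lintegral_prod_right').aemeasurable
      _ = ∑' i, ∑' j, en κ (ν i) (ν j) := rfl
  have htsum : (∑' i : ℕ, (2⁻¹ : ℝ≥0∞) ^ i) = 2 := by
    rw [ENNReal.tsum_geometric, ENNReal.one_sub_inv_two, inv_inv]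
  have henle : en κ ξ ξ ≤ 4 := by
    rw [hen]
    calc (∑' i, ∑' j, en κ (ν i) (ν j))
        ≤ ∑' i : ℕ, ∑' j : ℕ, (2⁻¹ : ℝ≥0∞) ^ i * 2⁻¹ ^ j :=
          ENNReal.tsum_le_tsum fun i => ENNReal.tsum_le_tsum fun j => hcross i j
      _ = ∑' i : ℕ, (2⁻¹ : ℝ≥0∞) ^ i * ∑' j : ℕ, (2⁻¹ : ℝ≥0∞) ^ j := by
          refine tsum_congr fun i => ?_
          rw [ENNReal.tsum_mul_left]
      _ = (∑' i : ℕ, (2⁻¹ : ℝ≥0∞) ^ i) * ∑' j : ℕ, (2⁻¹ : ℝ≥0∞) ^ j :=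
          ENNReal.tsum_mul_right
      _ = 4 := by rw [htsum]; norm_num
  refine ⟨ξ, hξnull, ?_, ?_⟩
  · exact ne_top_of_le_ne_top (by norm_num) henle
  · have h1 : ξ Set.univ ≤ ξ A₁ + ξ A₁ᶜ := by
      rw [← Set.union_compl_self A₁]
      exact measure_union_le _ _
    rw [hmass, hξnull, add_zero] at h1
    exact top_le_iff.mp h1
end
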